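/- arXiv:1606.01484 — 4 statements merged into one kernel-verified Lean document; each statement's English description precedes it below -/
import Mathlib

section
/- (Monotonicity of the EM algorithm) If θ' maximizes the Q-function Q(θ; θ₀) = ∫ p(x|y; θ₀) log p(y, x; θ) dx over θ, i.e. Q(θ'; θ₀) ≥ Q(θ₀; θ₀), then the log-likelihood does not decrease: log p(y; θ') ≥ log p(y; θ₀). -/
open MeasureTheory

/-- Monotonicity of the EM algorithm: if `θ'` does not decrease the `Q`-function
relative to `θ₀`, then the log-likelihood does not decrease. -/
theorem em_monotone {α Θ : Type*} [MeasurableSpace α] (μ : Measure α)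
    (p : Θ → α → ℝ) (θ₀ θ' : Θ)
    (hpm : ∀ θ, Measurable (p θ))
    (hpos : ∀ θ, ∀ᵐ x ∂μ, 0 < p θ x)
    (hpInt : ∀ θ, Integrable (p θ) μ)
    (L : Θ → ℝ) (hL : ∀ θ, L θ = ∫ x, p θ x ∂μ)
    (hLpos : ∀ θ, 0 < L θ)
    (Q : Θ → Θ → ℝ)
    (hQ : ∀ θ θ₁, Q θ θ₁ = ∫ x, (p θ₁ x / L θ₁) * Real.log (p θ x) ∂μ)
    (hQInt : ∀ θ θ₁, Integrable (fun x => (p θ₁ x / L θ₁) * Real.log (p θ x)) μ)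
    (hM : Q θ₀ θ₀ ≤ Q θ' θ₀) :
    Real.log (L θ₀) ≤ Real.log (L θ') := by
  have hL0 : 0 < L θ₀ := hLpos θ₀
  -- the difference of Q-values as an integral
  have hdiff : Q θ' θ₀ - Q θ₀ θ₀
      = ∫ x, ((p θ₀ x / L θ₀) * Real.log (p θ' x)
              - (p θ₀ x / L θ₀) * Real.log (p θ₀ x)) ∂μ := by
    rw [hQ, hQ, integral_sub (hQInt θ' θ₀) (hQInt θ₀ θ₀)]
  -- integrable upper bound
  have hgInt : Integrable (fun x => p θ' x / L θ₀ - p θ₀ x / L θ₀) μ := by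
    exact ((hpInt θ').div_const _).sub ((hpInt θ₀).div_const _)
  have hle : Q θ' θ₀ - Q θ₀ θ₀ ≤ L θ' / L θ₀ - 1 := by
    rw [hdiff]
    have hgval : (∫ x, (p θ' x / L θ₀ - p θ₀ x / L θ₀) ∂μ) = L θ' / L θ₀ - 1 := by
      rw [integral_sub ((hpInt θ').div_const _) ((hpInt θ₀).div_const _),
        integral_div, integral_div, ← hL, ← hL, div_self hL0.ne']
    rw [← hgval]
    refine integral_mono_ae ((hQInt θ' θ₀).sub (hQInt θ₀ θ₀)) hgInt ?_
    filter_upwards [hpos θ₀, hpos θ'] with x h0 h1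
    have h0' : p θ₀ x ≠ 0 := h0.ne'
    have hratio : 0 < p θ' x / p θ₀ x := div_pos h1 h0
    have hlog : Real.log (p θ' x) - Real.log (p θ₀ x) ≤ p θ' x / p θ₀ x - 1 := by
      have := Real.log_le_sub_one_of_pos hratio
      rwa [Real.log_div h1.ne' h0'] at this
    have hq : 0 ≤ p θ₀ x / L θ₀ := div_nonneg h0.le hL0.le
    calc (p θ₀ x / L θ₀) * Real.log (p θ' x) - (p θ₀ x / L θ₀) * Real.log (p θ₀ x)
        = (p θ₀ x / L θ₀) * (Real.log (p θ' x) - Real.log (p θ₀ x)) := by ring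
      _ ≤ (p θ₀ x / L θ₀) * (p θ' x / p θ₀ x - 1) := by
          exact mul_le_mul_of_nonneg_left hlog hq
      _ = p θ' x / L θ₀ - p θ₀ x / L θ₀ := by
          field_simp
  have h0 : (0:ℝ) ≤ Q θ' θ₀ - Q θ₀ θ₀ := by linarith
  have : (1:ℝ) ≤ L θ' / L θ₀ := by linarith
  have hLle : L θ₀ ≤ L θ' := by
    rwa [le_div_iff₀ hL0, one_mul] at this
  exact Real.log_le_log hL0 hLle
end

section
/- (Monotonicity of the annealed free energy, Theorem 1 of the paper, classical form) Let F_β(θ) = −(1/β) log ∫ p(x; θ)^β dx with f_θ(x) = p(x; θ)^β / ∫ p(x'; θ)^β dx', and let U_β(θ; θ₀) = −∫ f_{θ₀}(x) log p(x; θ) dx. If θ₁ minimizes U_β(·; θ₀), i.e. U_β(θ₁; θ₀) ≤ U_β(θ₀; θ₀), then F_β(θ₁) ≤ F_β(θ₀). -/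
open MeasureTheory

/-- Monotonicity of the annealed free energy (Theorem 1, classical `Γ = 0` form):
if `θ₁` minimizes `U_β(·; θ₀)`, then `F_β(θ₁) ≤ F_β(θ₀)`. -/
theorem annealed_free_energy_monotone {α Θ : Type*} [MeasurableSpace α] (μ : Measure α)
    (p : Θ → α → ℝ) (β : ℝ) (hβ : 0 < β)
    (hpm : ∀ θ, Measurable (p θ))
    (hpos : ∀ θ, ∀ᵐ x ∂μ, 0 < p θ x)
    (Z : Θ → ℝ) (hZ : ∀ θ, Z θ = ∫ x, p θ x ^ β ∂μ)
    (hZpos : ∀ θ, 0 < Z θ)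
    (hZInt : ∀ θ, Integrable (fun x => p θ x ^ β) μ)
    (f : Θ → α → ℝ) (hf : ∀ θ x, f θ x = p θ x ^ β / Z θ)
    (F : Θ → ℝ) (hF : ∀ θ, F θ = -(1 / β) * Real.log (Z θ))
    (U : Θ → Θ → ℝ)
    (hU : ∀ θ θ', U θ θ' = -∫ x, f θ' x * Real.log (p θ x) ∂μ)
    (hUInt : ∀ θ θ', Integrable (fun x => f θ' x * Real.log (p θ x)) μ)
    (θ₀ θ₁ : Θ)
    (hM : U θ₁ θ₀ ≤ U θ₀ θ₀) :
    F θ₁ ≤ F θ₀ := by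
  have hβ' : (0:ℝ) < 1/β := by positivity
  have hZ0 := hZpos θ₀
  have hZ1 := hZpos θ₁
  have hf0int : Integrable (f θ₀) μ :=
    ((hZInt θ₀).div_const (Z θ₀)).congr (Filter.Eventually.of_forall fun x => (hf θ₀ x).symm)
  have hint1 : Integrable (fun x => p θ₁ x ^ β / Z θ₁) μ := (hZInt θ₁).div_const _
  have hIf0 : ∫ x, f θ₀ x ∂μ = 1 := by
    rw [MeasureTheory.integral_congr_ae (Filter.Eventually.of_forall fun x => hf θ₀ x),
        integral_div, ← hZ θ₀, div_self hZ0.ne']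
  have hI1 : ∫ x, p θ₁ x ^ β / Z θ₁ ∂μ = 1 := by
    rw [integral_div, ← hZ θ₁, div_self hZ1.ne']
  set c : ℝ := Real.log (Z θ₀) - Real.log (Z θ₁) with hc
  have hae : ∀ᵐ x ∂μ,
      β * (f θ₀ x * Real.log (p θ₁ x)) - β * (f θ₀ x * Real.log (p θ₀ x)) + c * f θ₀ x
        ≤ p θ₁ x ^ β / Z θ₁ - f θ₀ x := by
    filter_upwards [hpos θ₀, hpos θ₁] with x h0 h1
    have hf0x : 0 < f θ₀ x := by rw [hf]; positivity
    set h : ℝ := p θ₁ x ^ β / (Z θ₁ * f θ₀ x) with hh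
    have hhpos : 0 < h := by rw [hh]; positivity
    have hlog : Real.log h ≤ h - 1 := Real.log_le_sub_one_of_pos hhpos
    have key := mul_le_mul_of_nonneg_left hlog hf0x.le
    have e1 : f θ₀ x * Real.log h
        = β * (f θ₀ x * Real.log (p θ₁ x)) - β * (f θ₀ x * Real.log (p θ₀ x)) + c * f θ₀ x := by
      have hlh : Real.log h = β * Real.log (p θ₁ x) - β * Real.log (p θ₀ x) + c := by
        rw [hh, hf θ₀ x, Real.log_div (by positivity) (by positivity),
            Real.log_mul hZ1.ne' (by positivity),
            Real.log_div (by positivity) hZ0.ne',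
            Real.log_rpow h1, Real.log_rpow h0, hc]
        ring
      rw [hlh]; ring
    have e2 : f θ₀ x * (h - 1) = p θ₁ x ^ β / Z θ₁ - f θ₀ x := by
      rw [hh]
      field_simp
    rw [e1, e2] at key
    exact key
  have hA : Integrable (fun x => β * (f θ₀ x * Real.log (p θ₁ x))) μ := (hUInt θ₁ θ₀).const_mul β
  have hB : Integrable (fun x => β * (f θ₀ x * Real.log (p θ₀ x))) μ := (hUInt θ₀ θ₀).const_mul β
  have hC : Integrable (fun x => c * f θ₀ x) μ := hf0int.const_mul c
  have hX : Integrable (fun x =>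
      β * (f θ₀ x * Real.log (p θ₁ x)) - β * (f θ₀ x * Real.log (p θ₀ x))) μ := hA.sub hB
  have hintL : Integrable (fun x =>
      β * (f θ₀ x * Real.log (p θ₁ x)) - β * (f θ₀ x * Real.log (p θ₀ x)) + c * f θ₀ x) μ :=
    hX.add hC
  have hintR : Integrable (fun x => p θ₁ x ^ β / Z θ₁ - f θ₀ x) μ := hint1.sub hf0int
  have hle := integral_mono_ae hintL hintR hae
  rw [integral_sub hint1 hf0int, hI1, hIf0] at hle
  rw [integral_add hX hC, integral_sub hA hB,
      integral_const_mul, integral_const_mul, integral_const_mul, hIf0] at hle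
  have h1 : ∫ x, f θ₀ x * Real.log (p θ₁ x) ∂μ = -U θ₁ θ₀ := by rw [hU θ₁ θ₀]; ring
  have h2 : ∫ x, f θ₀ x * Real.log (p θ₀ x) ∂μ = -U θ₀ θ₀ := by rw [hU θ₀ θ₀]; ring
  rw [h1, h2, hc] at hle
  have hlogle : Real.log (Z θ₀) ≤ Real.log (Z θ₁) := by
    nlinarith [mul_le_mul_of_nonneg_left hM hβ.le]
  rw [hF θ₀, hF θ₁]
  nlinarith
end

section
/- (Strict decrease criterion) With F_β, U_β, S_β as in the free energy decomposition, if θ₁ minimizes U_β(·; θ₀) then F_β(θ₀) − F_β(θ₁) = [U_β(θ₀;θ₀) − U_β(θ₁;θ₀)] + (1/β)·KL(f_{θ₀} ‖ f_{θ₁}) ≥ 0, and F_β(θ₁) = F_β(θ₀) if and only if U_β(θ₁; θ₀) = U_β(θ₀; θ₀) and KL(f_{θ₀} ‖ f_{θ₁}) = 0. -/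
open MeasureTheory

/-- Strict decrease criterion (equality case of Theorem 1): if `θ₁` minimizes
`U_β(·; θ₀)`, then `F_β(θ₀) − F_β(θ₁) = [U_β(θ₀;θ₀) − U_β(θ₁;θ₀)] + (1/β) KL(f_{θ₀}‖f_{θ₁}) ≥ 0`,
with equality of free energies iff both the `U` values agree and the KL divergence vanishes. -/
theorem annealed_strict_decrease {α Θ : Type*} [MeasurableSpace α] (μ : Measure α)
    (p : Θ → α → ℝ) (β : ℝ) (hβ : 0 < β)
    (hpm : ∀ θ, Measurable (p θ))
    (hpos : ∀ θ, ∀ᵐ x ∂μ, 0 < p θ x)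
    (Z : Θ → ℝ) (hZ : ∀ θ, Z θ = ∫ x, p θ x ^ β ∂μ)
    (hZpos : ∀ θ, 0 < Z θ)
    (hZInt : ∀ θ, Integrable (fun x => p θ x ^ β) μ)
    (f : Θ → α → ℝ) (hf : ∀ θ x, f θ x = p θ x ^ β / Z θ)
    (F : Θ → ℝ) (hF : ∀ θ, F θ = -(1 / β) * Real.log (Z θ))
    (U : Θ → Θ → ℝ)
    (hU : ∀ θ θ', U θ θ' = -∫ x, f θ' x * Real.log (p θ x) ∂μ)
    (hUInt : ∀ θ θ', Integrable (fun x => f θ' x * Real.log (p θ x)) μ)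
    (KL : Θ → Θ → ℝ)
    (hKL : ∀ θ θ', KL θ θ' = ∫ x, f θ x * Real.log (f θ x / f θ' x) ∂μ)
    (hKLInt : ∀ θ θ', Integrable (fun x => f θ x * Real.log (f θ x / f θ' x)) μ)
    (θ₀ θ₁ : Θ)
    (hM : ∀ θ, U θ₁ θ₀ ≤ U θ θ₀) :
    F θ₀ - F θ₁ = (U θ₀ θ₀ - U θ₁ θ₀) + (1 / β) * KL θ₀ θ₁ ∧
      0 ≤ F θ₀ - F θ₁ ∧
      (F θ₁ = F θ₀ ↔ (U θ₁ θ₀ = U θ₀ θ₀ ∧ KL θ₀ θ₁ = 0)) := by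
  have hβ' : β ≠ 0 := ne_of_gt hβ
  -- integrability and normalization of f
  have hfInt : ∀ θ, Integrable (f θ) μ := by
    intro θ
    have : Integrable (fun x => p θ x ^ β / Z θ) μ := (hZInt θ).div_const _
    simpa [funext (hf θ)] using this
  have hfone : ∀ θ, ∫ x, f θ x ∂μ = 1 := by
    intro θ
    have : ∫ x, f θ x ∂μ = (∫ x, p θ x ^ β ∂μ) / Z θ := by
      simp only [hf, integral_div]
    rw [this, ← hZ θ, div_self (ne_of_gt (hZpos θ))]
  -- pointwise log decomposition
  have hlog : ∀ᵐ x ∂μ, f θ₀ x * Real.log (f θ₀ x / f θ₁ x)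
      = β * (f θ₀ x * Real.log (p θ₀ x)) - β * (f θ₀ x * Real.log (p θ₁ x))
        + (Real.log (Z θ₁) - Real.log (Z θ₀)) * f θ₀ x := by
    filter_upwards [hpos θ₀, hpos θ₁] with x h0 h1
    have hZ0 := hZpos θ₀
    have hZ1 := hZpos θ₁
    have hr0 : (0:ℝ) < p θ₀ x ^ β := Real.rpow_pos_of_pos h0 _
    have hr1 : (0:ℝ) < p θ₁ x ^ β := Real.rpow_pos_of_pos h1 _
    have hf0 : (0:ℝ) < f θ₀ x := by rw [hf]; positivity
    have hf1 : (0:ℝ) < f θ₁ x := by rw [hf]; positivity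
    have : Real.log (f θ₀ x / f θ₁ x)
        = β * Real.log (p θ₀ x) - Real.log (Z θ₀)
          - (β * Real.log (p θ₁ x) - Real.log (Z θ₁)) := by
      rw [Real.log_div (ne_of_gt hf0) (ne_of_gt hf1), hf, hf,
        Real.log_div (ne_of_gt hr0) (ne_of_gt hZ0),
        Real.log_div (ne_of_gt hr1) (ne_of_gt hZ1),
        Real.log_rpow h0, Real.log_rpow h1]
    rw [this]; ring
  -- value of KL
  have hKLval : KL θ₀ θ₁ = β * (U θ₁ θ₀ - U θ₀ θ₀)
      + (Real.log (Z θ₁) - Real.log (Z θ₀)) := by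
    rw [hKL, integral_congr_ae hlog]
    have hI1 : Integrable (fun x => β * (f θ₀ x * Real.log (p θ₀ x))
        - β * (f θ₀ x * Real.log (p θ₁ x))) μ :=
      ((hUInt θ₀ θ₀).const_mul β).sub ((hUInt θ₁ θ₀).const_mul β)
    rw [integral_add hI1 ((hfInt θ₀).const_mul _),
      integral_sub ((hUInt θ₀ θ₀).const_mul β) ((hUInt θ₁ θ₀).const_mul β),
      integral_const_mul, integral_const_mul, integral_const_mul, hfone,
      hU θ₀ θ₀, hU θ₁ θ₀]
    ring
  -- nonnegativity of KL
  have hKLnn : 0 ≤ KL θ₀ θ₁ := by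
    have hptwise : ∀ᵐ x ∂μ, f θ₀ x - f θ₁ x ≤ f θ₀ x * Real.log (f θ₀ x / f θ₁ x) := by
      filter_upwards [hpos θ₀, hpos θ₁] with x h0 h1
      have hf0 : (0:ℝ) < f θ₀ x := by
        rw [hf]; exact div_pos (Real.rpow_pos_of_pos h0 _) (hZpos θ₀)
      have hf1 : (0:ℝ) < f θ₁ x := by
        rw [hf]; exact div_pos (Real.rpow_pos_of_pos h1 _) (hZpos θ₁)
      have h1' : Real.log (f θ₁ x / f θ₀ x) ≤ f θ₁ x / f θ₀ x - 1 :=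
        Real.log_le_sub_one_of_pos (div_pos hf1 hf0)
      have h2 : Real.log (f θ₀ x / f θ₁ x) = -Real.log (f θ₁ x / f θ₀ x) := by
        rw [Real.log_div (ne_of_gt hf0) (ne_of_gt hf1),
          Real.log_div (ne_of_gt hf1) (ne_of_gt hf0)]; ring
      rw [h2]
      have h3 : f θ₀ x * (f θ₁ x / f θ₀ x) = f θ₁ x := by field_simp
      nlinarith [mul_le_mul_of_nonneg_left h1' (le_of_lt hf0)]
    have hmono : ∫ x, (f θ₀ x - f θ₁ x) ∂μ ≤ ∫ x, f θ₀ x * Real.log (f θ₀ x / f θ₁ x) ∂μ :=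
      integral_mono_ae ((hfInt θ₀).sub (hfInt θ₁)) (hKLInt θ₀ θ₁) hptwise
    have h0 : ∫ x, (f θ₀ x - f θ₁ x) ∂μ = 0 := by
      rw [integral_sub (hfInt θ₀) (hfInt θ₁), hfone, hfone]; ring
    rw [hKL]; linarith
  -- the main identity
  have hUle : U θ₁ θ₀ ≤ U θ₀ θ₀ := hM θ₀
  have hmain : F θ₀ - F θ₁ = (U θ₀ θ₀ - U θ₁ θ₀) + (1 / β) * KL θ₀ θ₁ := by
    rw [hF, hF, hKLval]; field_simp; ring
  refine ⟨hmain, ?_, ?_⟩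
  · have : 0 ≤ (1 / β) * KL θ₀ θ₁ := by positivity
    linarith
  · constructor
    · intro h
      have hsum : (U θ₀ θ₀ - U θ₁ θ₀) + (1 / β) * KL θ₀ θ₁ = 0 := by
        rw [← hmain, h]; ring
      have hKLnn' : 0 ≤ (1 / β) * KL θ₀ θ₁ := by positivity
      have h1 : U θ₁ θ₀ = U θ₀ θ₀ := by linarith
      have h2 : (1 / β) * KL θ₀ θ₁ = 0 := by linarith
      refine ⟨h1, ?_⟩
      have : (1:ℝ)/β ≠ 0 := by positivity
      exact (mul_eq_zero.mp h2).resolve_left this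
    · rintro ⟨h1, h2⟩
      have : F θ₀ - F θ₁ = 0 := by rw [hmain, h1, h2]; ring
      linarith
end

section
/- (Chain of inequalities for one full annealed EM step) Let θ₁ ∈ argmin_θ U_β(θ; θ₀). Then β F_β(θ₁) ≤ β U_β(θ₁;θ₀) − S_β(θ₀;θ₀) ≤ β U_β(θ₀;θ₀) − S_β(θ₀;θ₀) = β F_β(θ₀), where S_β(θ;θ₀) = −∫ f_{θ₀} log f_θ and F_β, U_β, f_θ are as before; in particular the first inequality is the variational bound F_β(θ) ≤ U_β(θ;θ₀) − (1/β) S_β(θ₀;θ₀) valid for all θ. -/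
open MeasureTheory

/-- The full chain of inequalities for one annealed EM step: with `θ₁` a
minimizer of `U_β(·;θ₀)`,
`β F_β(θ₁) ≤ β U_β(θ₁;θ₀) − S_β(θ₀;θ₀) ≤ β U_β(θ₀;θ₀) − S_β(θ₀;θ₀) = β F_β(θ₀)`,
and in general `F_β(θ) ≤ U_β(θ;θ₀) − (1/β) S_β(θ₀;θ₀)` for all `θ`. -/
theorem annealed_em_chain {α Θ : Type*} [MeasurableSpace α] (μ : Measure α)
    (p : Θ → α → ℝ) (β : ℝ) (hβ : 0 < β)
    (hpm : ∀ θ, Measurable (p θ))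
    (hpos : ∀ θ, ∀ᵐ x ∂μ, 0 < p θ x)
    (Z : Θ → ℝ) (hZ : ∀ θ, Z θ = ∫ x, p θ x ^ β ∂μ)
    (hZpos : ∀ θ, 0 < Z θ)
    (hZInt : ∀ θ, Integrable (fun x => p θ x ^ β) μ)
    (f : Θ → α → ℝ) (hf : ∀ θ x, f θ x = p θ x ^ β / Z θ)
    (F : Θ → ℝ) (hF : ∀ θ, F θ = -(1 / β) * Real.log (Z θ))
    (U : Θ → Θ → ℝ)
    (hU : ∀ θ θ', U θ θ' = -∫ x, f θ' x * Real.log (p θ x) ∂μ)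
    (hUInt : ∀ θ θ', Integrable (fun x => f θ' x * Real.log (p θ x)) μ)
    (S : Θ → Θ → ℝ)
    (hS : ∀ θ θ', S θ θ' = -∫ x, f θ' x * Real.log (f θ x) ∂μ)
    (hSInt : ∀ θ θ', Integrable (fun x => f θ' x * Real.log (f θ x)) μ)
    (θ₀ θ₁ : Θ)
    (hM : ∀ θ, U θ₁ θ₀ ≤ U θ θ₀) :
    β * F θ₁ ≤ β * U θ₁ θ₀ - S θ₀ θ₀ ∧
      β * U θ₁ θ₀ - S θ₀ θ₀ ≤ β * U θ₀ θ₀ - S θ₀ θ₀ ∧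
      β * U θ₀ θ₀ - S θ₀ θ₀ = β * F θ₀ ∧
      ∀ θ, F θ ≤ U θ θ₀ - (1 / β) * S θ₀ θ₀ := by
 -- total mass one and basic facts
  have hfi : ∀ θ, Integrable (f θ) μ := by
    intro θ
    have h := (hZInt θ).div_const (Z θ)
    have : f θ = fun x => p θ x ^ β / Z θ := funext (hf θ)
    rw [this]; exact h
  have hmass : ∀ θ, ∫ x, f θ x ∂μ = 1 := by
    intro θ
    simp only [hf, integral_div, ← hZ]
    exact div_self (hZpos θ).ne'
  have hfpos : ∀ θ, ∀ᵐ x ∂μ, 0 < f θ x := by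
    intro θ
    filter_upwards [hpos θ] with x hx
    rw [hf]
    exact div_pos (Real.rpow_pos_of_pos hx β) (hZpos θ)
  have hkey : ∀ θ, S θ θ₀ = β * U θ θ₀ + Real.log (Z θ) := by
    intro θ
    have hae : (fun x => f θ₀ x * Real.log (f θ x))
        =ᵐ[μ] fun x => β * (f θ₀ x * Real.log (p θ x)) - Real.log (Z θ) * f θ₀ x := by
      filter_upwards [hpos θ] with x hx
      rw [hf θ x, Real.log_div (Real.rpow_pos_of_pos hx β).ne' (hZpos θ).ne',
        Real.log_rpow hx]
      ring
    have hint : ∫ x, f θ₀ x * Real.log (f θ x) ∂μ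
        = β * ∫ x, f θ₀ x * Real.log (p θ x) ∂μ - Real.log (Z θ) := by
      rw [integral_congr_ae hae,
        integral_sub ((hUInt θ θ₀).const_mul β) ((hfi θ₀).const_mul (Real.log (Z θ))),
        integral_const_mul, integral_const_mul, hmass θ₀, mul_one]
    rw [hS, hU, hint]; ring
  have hgibbs : ∀ θ, S θ₀ θ₀ ≤ S θ θ₀ := by
    intro θ
    rw [hS, hS, neg_le_neg_iff]
    have hpt : ∀ᵐ x ∂μ, f θ₀ x * Real.log (f θ x)
        ≤ f θ₀ x * Real.log (f θ₀ x) + (f θ x - f θ₀ x) := by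
      filter_upwards [hfpos θ, hfpos θ₀] with x ha hb
      have h := Real.log_le_sub_one_of_pos (div_pos ha hb)
      rw [Real.log_div ha.ne' hb.ne'] at h
      have h2 : f θ₀ x * (Real.log (f θ x) - Real.log (f θ₀ x))
          ≤ f θ₀ x * (f θ x / f θ₀ x - 1) :=
        mul_le_mul_of_nonneg_left h hb.le
      have h3 : f θ₀ x * (f θ x / f θ₀ x - 1) = f θ x - f θ₀ x := by
        field_simp
      nlinarith [h2, h3]
    calc ∫ x, f θ₀ x * Real.log (f θ x) ∂μ
        ≤ ∫ x, (f θ₀ x * Real.log (f θ₀ x) + (f θ x - f θ₀ x)) ∂μ :=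
          integral_mono_ae (hSInt θ θ₀) ((hSInt θ₀ θ₀).add (show Integrable (fun x => f θ x - f θ₀ x) μ from (hfi θ).sub (hfi θ₀))) hpt
      _ = ∫ x, f θ₀ x * Real.log (f θ₀ x) ∂μ := by
          rw [integral_add (hSInt θ₀ θ₀) (show Integrable (fun x => f θ x - f θ₀ x) μ from (hfi θ).sub (hfi θ₀)),
            integral_sub (hfi θ) (hfi θ₀), hmass, hmass]
          ring
  have hβF : ∀ θ, β * F θ = -Real.log (Z θ) := by
    intro θ
    rw [hF]
    field_simp
  have hvar : ∀ θ, β * F θ ≤ β * U θ θ₀ - S θ₀ θ₀ := by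
    intro θ
    have h1 := hgibbs θ
    rw [hkey θ] at h1
    rw [hβF θ]
    linarith
  refine ⟨hvar θ₁, ?_, ?_, ?_⟩
  · have := hM θ₀
    nlinarith
  · have h := hkey θ₀
    rw [hβF θ₀]
    linarith
  · intro θ
    refine le_of_mul_le_mul_left ?_ hβ
    calc β * F θ ≤ β * U θ θ₀ - S θ₀ θ₀ := hvar θ
      _ = β * (U θ θ₀ - 1 / β * S θ₀ θ₀) := by field_simp
end
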